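/- Let Q be symmetric positive definite, A nonsingular with ‖AᵀQA − I‖ < 1/2, b ∈ ℝⁿ, and let u be the unique solution of (AᵀQA − I)u⁺ + u + Aᵀb = 0. Then the semi-smooth Newton sequence x_{k+1} := −((AᵀQA − I)·diag(sgn(x_k⁺)) + I)⁻¹ Aᵀb, starting from any x₀ ∈ ℝⁿ, is well defined and satisfies ‖u − x_{k+1}‖ ≤ (‖AᵀQA − I‖/(1 − ‖AᵀQA − I‖))·‖u − x_k‖ for all k; in particular, since ‖AᵀQA−I‖ < 1/2 the factor is < 1 and x_k converges to u. -/

import Mathlib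

noncomputable section

/-- `E n` is the n-dimensional Euclidean space over ℝ. -/
abbrev E (n : ℕ) := EuclideanSpace ℝ (Fin n)

variable {n : ℕ}

/-- componentwise positive part `x⁺` -/
def posPart (x : E n) : E n := WithLp.toLp 2 (fun i => max (x i) 0)

/-- componentwise negative part `x⁻` -/
def negPart (x : E n) : E n := WithLp.toLp 2 (fun i => max (-(x i)) 0)

/-- the 0-1 vector `sgn(x⁺)` indicating positive components of `x` -/
def sgnPos (x : E n) : Fin n → ℝ := fun i => if 0 < x i then 1 else 0

/-- matrix-vector multiplication on Euclidean space -/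
def mulV (M : Matrix (Fin n) (Fin n) ℝ) (x : E n) : E n := Matrix.toEuclideanLin M x

/-- operator norm of a matrix induced by the Euclidean norm -/
def opN (M : Matrix (Fin n) (Fin n) ℝ) : ℝ :=
  ‖LinearMap.toContinuousLinearMap (Matrix.toEuclideanLin M)‖

/-- the nonnegative orthant ℝⁿ₊ -/
def nonnegOrthant (n : ℕ) : Set (E n) := {x | ∀ i, 0 ≤ x i}

/-- the simplicial cone A·ℝⁿ₊ -/
def simplicialCone (A : Matrix (Fin n) (Fin n) ℝ) : Set (E n) :=
  {y | ∃ x ∈ nonnegOrthant n, y = mulV A x}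

/-- the dual cone K* of a set K -/
def dualCone (K : Set (E n)) : Set (E n) := {y | ∀ x ∈ K, 0 ≤ (inner ℝ y x : ℝ)}

lemma mulV_apply (M : Matrix (Fin n) (Fin n) ℝ) (x : E n) (i : Fin n) :
    mulV M x i = M.mulVec x i := rfl

lemma mulV_addM (M N : Matrix (Fin n) (Fin n) ℝ) (x : E n) :
    mulV (M + N) x = mulV M x + mulV N x := by
  ext i; simp [mulV_apply, Matrix.add_mulVec]

lemma mulV_mulM (M N : Matrix (Fin n) (Fin n) ℝ) (x : E n) :
    mulV (M * N) x = mulV M (mulV N x) := by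
  ext i; rw [mulV_apply, ← Matrix.mulVec_mulVec]; rfl

lemma mulV_oneM (x : E n) : mulV 1 x = x := by
  ext i; simp [mulV_apply]

lemma mulV_subV (M : Matrix (Fin n) (Fin n) ℝ) (x y : E n) :
    mulV M (x - y) = mulV M x - mulV M y := by
  simp [mulV, map_sub]

lemma mulV_norm_le (M : Matrix (Fin n) (Fin n) ℝ) (x : E n) :
    ‖mulV M x‖ ≤ opN M * ‖x‖ :=
  (LinearMap.toContinuousLinearMap (Matrix.toEuclideanLin M)).le_opNorm x

lemma norm_le_of_abs_le {y z : E n} (h : ∀ i, |y i| ≤ |z i|) : ‖y‖ ≤ ‖z‖ := by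
  rw [EuclideanSpace.norm_eq, EuclideanSpace.norm_eq]
  apply Real.sqrt_le_sqrt
  apply Finset.sum_le_sum
  intro i _
  simp only [Real.norm_eq_abs]
  exact pow_le_pow_left₀ (abs_nonneg _) (h i) 2

lemma key_abs (a c : ℝ) : |(if 0 < c then (1:ℝ) else 0) * a - max a 0| ≤ |a - c| := by
  split_ifs with hc
  · rcases le_or_gt a 0 with ha | ha
    · rw [max_eq_right ha, one_mul, sub_zero, abs_of_nonpos ha,
        abs_of_nonpos (by linarith : a - c ≤ 0)]
      linarith
    · rw [max_eq_left ha.le, one_mul, sub_self, abs_zero]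
      exact abs_nonneg _
  · push_neg at hc
    rcases le_or_gt a 0 with ha | ha
    · rw [max_eq_right ha, zero_mul, sub_zero, abs_zero]
      exact abs_nonneg _
    · rw [max_eq_left ha.le, zero_mul, zero_sub, abs_neg, abs_of_pos ha,
        abs_of_pos (by linarith : 0 < a - c)]
      linarith

lemma diag_norm_le (d : Fin n → ℝ) (hd : ∀ i, d i = 0 ∨ d i = 1) (v : E n) :
    ‖mulV (Matrix.diagonal d) v‖ ≤ ‖v‖ := by
  apply norm_le_of_abs_le
  intro i
  rw [mulV_apply, Matrix.mulVec_diagonal]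
  rcases hd i with h | h <;> simp [h]

lemma sgnPos_01 (z : E n) (i : Fin n) : sgnPos z i = 0 ∨ sgnPos z i = 1 := by
  unfold sgnPos; split_ifs <;> simp

theorem stmt12 (Q A : Matrix (Fin n) (Fin n) ℝ) (hQ : Q.PosDef) (hA : IsUnit A.det)
    (h : opN (A.transpose * Q * A - 1) < 1/2) (b u : E n)
    (hu : mulV (A.transpose * Q * A - 1) (posPart u) + u + mulV A.transpose b = 0)
    (x : ℕ → E n)
    (hrec : ∀ k, mulV ((A.transpose * Q * A - 1) * Matrix.diagonal (sgnPos (x k)) + 1)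
        (x (k + 1)) = -(mulV A.transpose b)) :
    (∀ z : E n,
      IsUnit ((A.transpose * Q * A - 1) * Matrix.diagonal (sgnPos z) + 1).det) ∧
    (∀ k, ‖u - x (k + 1)‖ ≤
      (opN (A.transpose * Q * A - 1) / (1 - opN (A.transpose * Q * A - 1))) * ‖u - x k‖) ∧
    (opN (A.transpose * Q * A - 1) / (1 - opN (A.transpose * Q * A - 1)) < 1) ∧
    Filter.Tendsto x Filter.atTop (nhds u) := by
  set B := A.transpose * Q * A - 1 with hB
  set t := opN B with htdef
  have ht0 : 0 ≤ t := norm_nonneg _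
  have ht1 : t < 1 := by linarith
  have h1t : 0 < 1 - t := by linarith
  have hS : ∀ (D : Matrix (Fin n) (Fin n) ℝ) (y : E n),
      mulV (B * D + 1) y = mulV B (mulV D y) + y := by
    intro D y
    rw [mulV_addM, mulV_mulM, mulV_oneM]
  -- Part 1
  have part1 : ∀ z : E n, IsUnit ((B * Matrix.diagonal (sgnPos z) + 1)).det := by
    intro z
    rw [isUnit_iff_ne_zero]
    intro hdet
    obtain ⟨v, hv0, hv⟩ := (Matrix.exists_mulVec_eq_zero_iff).mpr hdet
    set v' : E n := WithLp.toLp 2 v with hv'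
    have hvv : mulV (B * Matrix.diagonal (sgnPos z) + 1) v' = 0 := by
      ext i
      show (B * Matrix.diagonal (sgnPos z) + 1).mulVec v i = (0 : E n) i
      rw [hv]
      rfl
    rw [hS] at hvv
    have hv'0 : v' ≠ 0 := fun hc => hv0 (by have := congrArg WithLp.ofLp hc; exact this)
    have hnv : 0 < ‖v'‖ := norm_pos_iff.mpr hv'0
    have heq : v' = -(mulV B (mulV (Matrix.diagonal (sgnPos z)) v')) := by
      rw [eq_neg_iff_add_eq_zero, add_comm]; exact hvv
    have hle : ‖v'‖ ≤ t * ‖v'‖ := by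
      calc ‖v'‖ = ‖mulV B (mulV (Matrix.diagonal (sgnPos z)) v')‖ := by
            conv_lhs => rw [heq]
            rw [norm_neg]
        _ ≤ t * ‖mulV (Matrix.diagonal (sgnPos z)) v'‖ := mulV_norm_le _ _
        _ ≤ t * ‖v'‖ := by
            exact mul_le_mul_of_nonneg_left (diag_norm_le _ (sgnPos_01 z) v') ht0
    nlinarith
  -- Part 2
  have part2 : ∀ k, ‖u - x (k + 1)‖ ≤ t / (1 - t) * ‖u - x k‖ := by
    intro k
    set D := Matrix.diagonal (sgnPos (x k)) with hD
    set e : E n := u - x (k + 1) with he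
    set w : E n := mulV D u - posPart u with hw
    have hx1 : mulV B (mulV D (x (k + 1))) + x (k + 1) = -(mulV A.transpose b) := by
      rw [← hS]; exact hrec k
    have hp : mulV B (posPart u) = -(mulV A.transpose b) - u := by
      have h2 := hu
      rw [← sub_eq_zero]
      rw [← h2]; abel
    have hkey : e = mulV B w - mulV B (mulV D e) := by
      rw [he, hw, mulV_subV, mulV_subV, mulV_subV, hp]
      have hx2 : mulV B (mulV D (x (k + 1))) = -(mulV A.transpose b) - x (k + 1) := by
        rw [← hx1]; abel
      rw [hx2]; abel
    have hDe : ‖mulV D e‖ ≤ ‖e‖ := diag_norm_le _ (sgnPos_01 _) e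
    have hwle : ‖w‖ ≤ ‖u - x k‖ := by
      apply norm_le_of_abs_le
      intro i
      have h1 : w i = (if 0 < x k i then (1:ℝ) else 0) * u i - max (u i) 0 := by
        show mulV D u i - posPart u i = _
        rw [mulV_apply, hD, Matrix.mulVec_diagonal]
        simp [sgnPos, _root_.posPart]
      have h2 : (u - x k) i = u i - x k i := rfl
      rw [h1, h2]
      exact key_abs (u i) (x k i)
    have hne : ‖e‖ ≤ t * ‖u - x k‖ + t * ‖e‖ := by
      calc ‖e‖ = ‖mulV B w - mulV B (mulV D e)‖ := by rw [← hkey]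
        _ ≤ ‖mulV B w‖ + ‖mulV B (mulV D e)‖ := norm_sub_le _ _
        _ ≤ t * ‖w‖ + t * ‖mulV D e‖ := add_le_add (mulV_norm_le _ _) (mulV_norm_le _ _)
        _ ≤ t * ‖u - x k‖ + t * ‖e‖ :=
            add_le_add (mul_le_mul_of_nonneg_left hwle ht0)
              (mul_le_mul_of_nonneg_left hDe ht0)
    rw [div_mul_eq_mul_div, le_div_iff₀ h1t]
    nlinarith
  -- Part 3
  have part3 : t / (1 - t) < 1 := by
    rw [div_lt_one h1t]; linarith
  refine ⟨part1, part2, part3, ?_⟩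
  -- Part 4
  set r := t / (1 - t) with hr
  have hr0 : 0 ≤ r := div_nonneg ht0 h1t.le
  have hbound : ∀ k, ‖u - x k‖ ≤ r ^ k * ‖u - x 0‖ := by
    intro k
    induction k with
    | zero => simp
    | succ k ih =>
        calc ‖u - x (k + 1)‖ ≤ r * ‖u - x k‖ := part2 k
          _ ≤ r * (r ^ k * ‖u - x 0‖) := mul_le_mul_of_nonneg_left ih hr0
          _ = r ^ (k + 1) * ‖u - x 0‖ := by ring
  have hlim : Filter.Tendsto (fun k => r ^ k * ‖u - x 0‖) Filter.atTop (nhds 0) := by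
    simpa using (tendsto_pow_atTop_nhds_zero_of_lt_one hr0 part3).mul_const ‖u - x 0‖
  have hsq : Filter.Tendsto (fun k => ‖u - x k‖) Filter.atTop (nhds 0) :=
    squeeze_zero (fun k => norm_nonneg _) hbound hlim
  rw [tendsto_iff_norm_sub_tendsto_zero]
  simpa [norm_sub_rev] using hsq
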